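/- For non-negative integers n_1,...,n_m with n = n_1+...+n_m and nonempty words w^1,...,w^n, the multiset Sh(OSh(w^1,...,w^{n_1}), ..., OSh(w^{n^{m-1}+1},...,w^n)) obtained by first ordered-shuffling within each of the m blocks and then shuffling the resulting m words equals the disjoint union over (n_1,...,n_m)-shuffle permutations π of the multisets OSh(w^{π^{-1}(1)},...,w^{π^{-1}(n)}). -/

import Mathlib

/-- Multiset of all shuffles (interleavings) of two lists. -/
def shuffles {α : Type*} : List α → List α → Multiset (List α)
  | [], bs => {bs}
  | a :: as, [] => {a :: as}
  | a :: as, b :: bs =>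
      (shuffles as (b :: bs)).map (a :: ·) + (shuffles (a :: as) bs).map (b :: ·)
termination_by as bs => as.length + bs.length

/-- Half (ordered) shuffle of two words: the shuffles in which the last letter
of the second word stays last.  Convention: `osh2 a [] = 0`, `osh2 [] b = {b}`. -/
def osh2 {α : Type*} (a b : List α) : Multiset (List α) :=
  match b.getLast? with
  | none => 0
  | some x => (shuffles a b.dropLast).map (· ++ [x])

/-- Multiset of ordered shuffles of a list of words (iterated half-shuffle,
left to right): interleavings in which the final letters of the words appear
in the given relative order. -/
def oshMany {α : Type*} (ws : List (List α)) : Multiset (List α) :=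
  ws.foldl (fun acc w => acc.bind fun u => osh2 u w) {([] : List α)}

/-- Multiset of all shuffles of a list of words. -/
def shMany {α : Type*} (ws : List (List α)) : Multiset (List α) :=
  ws.foldl (fun acc w => acc.bind fun u => shuffles u w) {([] : List α)}

/-- Shuffles of a list of multisets of words: all interleavings of all choices
of one word from each multiset. -/
def shManyM {α : Type*} (ms : List (Multiset (List α))) : Multiset (List α) :=
  ms.foldl (fun acc mw => acc.bind fun u => mw.bind fun w => shuffles u w) {([] : List α)}

section Aux

variable {α : Type*}

lemma shuffles_nil_left (v : List α) : shuffles [] v = {v} := by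
  cases v <;> simp [shuffles]

lemma shuffles_nil_right (u : List α) : shuffles u [] = {u} := by
  cases u <;> simp [shuffles]

lemma shuffles_cons_cons (a b : α) (as bs : List α) :
    shuffles (a :: as) (b :: bs) =
      (shuffles as (b :: bs)).map (a :: ·) + (shuffles (a :: as) bs).map (b :: ·) := by
  simp [shuffles]

lemma bind_singleton_id (s : Multiset (List α)) :
    (s.bind fun t => ({t} : Multiset (List α))) = s := by
  rw [Multiset.bind_singleton, Multiset.map_id']

lemma shuffles_comm (u v : List α) : shuffles u v = shuffles v u := by
  induction u generalizing v with
  | nil => simp [shuffles_nil_left, shuffles_nil_right]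
  | cons a as ih =>
    induction v with
    | nil => simp [shuffles_nil_left, shuffles_nil_right]
    | cons b bs ihv =>
      rw [shuffles_cons_cons, shuffles_cons_cons, ih (b :: bs), ihv, add_comm]

lemma shuffles_assoc (a b c : List α) :
    (shuffles a b).bind (fun t => shuffles t c)
      = (shuffles b c).bind (fun t => shuffles a t) := by
  induction a generalizing b c with
  | nil => simp [shuffles_nil_left, bind_singleton_id]
  | cons x a' iha =>
    induction b generalizing c with
    | nil => simp [shuffles_nil_left, shuffles_nil_right]
    | cons y b' ihb =>
      induction c with
      | nil => simp [shuffles_nil_right, bind_singleton_id]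
      | cons z c' ihc =>
        rw [shuffles_cons_cons x y, shuffles_cons_cons y z]
        simp only [Multiset.add_bind, Multiset.bind_map]
        have e1 : ((shuffles a' (y :: b')).bind fun t => shuffles (x :: t) (z :: c'))
            = ((shuffles a' (y :: b')).bind fun t =>
                (shuffles t (z :: c')).map (x :: ·) + (shuffles (x :: t) c').map (z :: ·)) :=
          Multiset.bind_congr fun t _ => shuffles_cons_cons x z t c'
        have e2 : ((shuffles (x :: a') b').bind fun t => shuffles (y :: t) (z :: c'))
            = ((shuffles (x :: a') b').bind fun t =>
                (shuffles t (z :: c')).map (y :: ·) + (shuffles (y :: t) c').map (z :: ·)) :=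
          Multiset.bind_congr fun t _ => shuffles_cons_cons y z t c'
        have f1 : ((shuffles b' (z :: c')).bind fun t => shuffles (x :: a') (y :: t))
            = ((shuffles b' (z :: c')).bind fun t =>
                (shuffles a' (y :: t)).map (x :: ·) + (shuffles (x :: a') t).map (y :: ·)) :=
          Multiset.bind_congr fun t _ => shuffles_cons_cons x y a' t
        have f2 : ((shuffles (y :: b') c').bind fun t => shuffles (x :: a') (z :: t))
            = ((shuffles (y :: b') c').bind fun t =>
                (shuffles a' (z :: t)).map (x :: ·) + (shuffles (x :: a') t).map (z :: ·)) :=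
          Multiset.bind_congr fun t _ => shuffles_cons_cons x z a' t
        rw [e1, e2, f1, f2]
        simp only [Multiset.bind_add, ← Multiset.map_bind]
        have hx : ((shuffles a' (y :: b')).bind fun t => shuffles t (z :: c'))
            = ((shuffles b' (z :: c')).bind fun t => shuffles a' (y :: t))
              + ((shuffles (y :: b') c').bind fun t => shuffles a' (z :: t)) := by
          rw [iha (y :: b') (z :: c'), shuffles_cons_cons y z]
          simp [Multiset.add_bind, Multiset.bind_map]
        have hy : ((shuffles (x :: a') b').bind fun t => shuffles t (z :: c'))
            = ((shuffles b' (z :: c')).bind fun t => shuffles (x :: a') t) := ihb (z :: c')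
        have hz : (((shuffles a' (y :: b')).bind fun t => shuffles (x :: t) c')
              + ((shuffles (x :: a') b').bind fun t => shuffles (y :: t) c'))
            = ((shuffles (y :: b') c').bind fun t => shuffles (x :: a') t) := by
          rw [← ihc]
          rw [shuffles_cons_cons x y]
          simp [Multiset.add_bind, Multiset.bind_map]
        rw [hx, hy, ← hz]
        simp only [Multiset.map_add]
        abel

lemma shuffles_bind_comm (u b c : List α) :
    (shuffles u b).bind (fun t => shuffles t c)
      = (shuffles u c).bind (fun t => shuffles t b) := by
  rw [shuffles_assoc, shuffles_assoc, shuffles_comm b c]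

lemma shuffles_snoc (p q : List α) (x y : α) :
    shuffles (p ++ [x]) (q ++ [y]) =
      (shuffles p (q ++ [y])).map (· ++ [x]) + (shuffles (p ++ [x]) q).map (· ++ [y]) := by
  induction p generalizing q with
  | nil =>
    induction q with
    | nil => simp [shuffles_nil_left, shuffles_nil_right, shuffles_cons_cons, add_comm]
    | cons c q' ihq =>
      simp only [List.nil_append, List.cons_append] at *
      rw [shuffles_cons_cons x c, ihq, shuffles_cons_cons]
      simp only [shuffles_nil_left, Multiset.map_add, Multiset.map_map, Multiset.map_singleton,
        Function.comp_def, List.cons_append, List.nil_append]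
      abel
  | cons a p' ihp =>
    induction q with
    | nil =>
      simp only [List.cons_append, List.nil_append] at *
      have h1 := ihp []
      simp only [List.nil_append] at h1
      rw [shuffles_cons_cons a y, shuffles_cons_cons a y, h1]
      simp only [shuffles_nil_left, shuffles_nil_right, Multiset.map_add, Multiset.map_map,
        Multiset.map_singleton, Function.comp_def, List.cons_append, List.nil_append]
      abel
    | cons c q' ihq =>
      simp only [List.cons_append] at *
      have h1 := ihp (c :: q')
      simp only [List.cons_append] at h1
      rw [shuffles_cons_cons a c, h1, ihq, shuffles_cons_cons a c,
        shuffles_cons_cons a c]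
      simp only [Multiset.map_add, Multiset.map_map, Function.comp_def, List.cons_append]
      abel

lemma mem_or_of_mem_shuffles {u v t : List α} (h : t ∈ shuffles u v) :
    ∀ x ∈ t, x ∈ u ∨ x ∈ v := by
  induction u generalizing v t with
  | nil =>
    rw [shuffles_nil_left, Multiset.mem_singleton] at h
    subst h; exact fun x hx => Or.inr hx
  | cons a as ih =>
    induction v generalizing t with
    | nil =>
      rw [shuffles_nil_right, Multiset.mem_singleton] at h
      subst h; exact fun x hx => Or.inl hx
    | cons b bs ihv =>
      rw [shuffles_cons_cons, Multiset.mem_add] at h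
      rcases h with h | h <;> rw [Multiset.mem_map] at h <;> obtain ⟨t', ht', rfl⟩ := h
      · intro x hx
        rcases List.mem_cons.1 hx with rfl | hx
        · exact Or.inl List.mem_cons_self
        · rcases ih ht' x hx with h | h
          · exact Or.inl (List.mem_cons_of_mem _ h)
          · exact Or.inr h
      · intro x hx
        rcases List.mem_cons.1 hx with rfl | hx
        · exact Or.inr List.mem_cons_self
        · rcases ihv ht' x hx with h | h
          · exact Or.inl h
          · exact Or.inr (List.mem_cons_of_mem _ h)

lemma osh2_concat (u a₀ : List α) (x : α) :
    osh2 u (a₀ ++ [x]) = (shuffles u a₀).map (· ++ [x]) := by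
  simp [osh2, List.getLast?_concat, List.dropLast_concat]

lemma oshMany_nil : oshMany ([] : List (List α)) = {[]} := rfl

lemma oshMany_concat (A : List (List α)) (w : List α) :
    oshMany (A ++ [w]) = (oshMany A).bind (fun u => osh2 u w) := by
  simp [oshMany, List.foldl_append]

lemma key : ∀ (n : ℕ) (A B : List (List α)), A.length + B.length = n →
    (∀ w ∈ A, w ≠ []) → (∀ w ∈ B, w ≠ []) →
    ((oshMany A).bind fun u => (oshMany B).bind fun v => shuffles u v)
      = (shuffles A B).bind oshMany := by
  intro n
  induction n using Nat.strong_induction_on with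
  | _ n ih =>
    intro A B hlen hA hB
    rcases A.eq_nil_or_concat with rfl | ⟨A', a, rfl⟩
    · simp only [oshMany_nil, Multiset.singleton_bind, shuffles_nil_left, bind_singleton_id]
    rcases B.eq_nil_or_concat with rfl | ⟨B', b, rfl⟩
    · simp only [oshMany_nil, Multiset.singleton_bind, shuffles_nil_right, bind_singleton_id]
    simp only [List.concat_eq_append] at *
    have ha : a ≠ [] := hA a (by simp)
    have hb : b ≠ [] := hB b (by simp)
    rcases a.eq_nil_or_concat with rfl | ⟨a₀, x, rfl⟩
    · exact absurd rfl ha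
    rcases b.eq_nil_or_concat with rfl | ⟨b₀, y, rfl⟩
    · exact absurd rfl hb
    simp only [List.concat_eq_append] at *
    have hA' : ∀ w ∈ A', w ≠ [] := fun w hw => hA w (by simp [hw])
    have hB' : ∀ w ∈ B', w ≠ [] := fun w hw => hB w (by simp [hw])
    have ih1 : ((oshMany A').bind fun u =>
          (oshMany (B' ++ [b₀ ++ [y]])).bind fun v => shuffles u v)
        = (shuffles A' (B' ++ [b₀ ++ [y]])).bind oshMany := by
      refine ih (A'.length + (B' ++ [b₀ ++ [y]]).length) ?_ _ _ rfl hA' hB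
      simp only [List.length_append, List.length_singleton] at hlen ⊢
      omega
    have ih2 : ((oshMany (A' ++ [a₀ ++ [x]])).bind fun u =>
          (oshMany B').bind fun v => shuffles u v)
        = (shuffles (A' ++ [a₀ ++ [x]]) B').bind oshMany := by
      refine ih ((A' ++ [a₀ ++ [x]]).length + B'.length) ?_ _ _ rfl hA hB'
      simp only [List.length_append, List.length_singleton] at hlen ⊢
      omega
    have L : ((oshMany (A' ++ [a₀ ++ [x]])).bind fun u =>
          (oshMany (B' ++ [b₀ ++ [y]])).bind fun v => shuffles u v)
        = ((oshMany A').bind fun u => (shuffles u a₀).bind fun p =>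
            (oshMany B').bind fun v => (shuffles v b₀).bind fun q =>
              ((shuffles p (q ++ [y])).map (· ++ [x])
                + (shuffles (p ++ [x]) q).map (· ++ [y]))) := by
      rw [oshMany_concat, oshMany_concat]
      simp only [osh2_concat, Multiset.bind_assoc, Multiset.bind_map]
      exact Multiset.bind_congr fun u _ => Multiset.bind_congr fun p _ =>
        Multiset.bind_congr fun v _ => Multiset.bind_congr fun q _ => shuffles_snoc p q x y
    have R : (shuffles (A' ++ [a₀ ++ [x]]) (B' ++ [b₀ ++ [y]])).bind oshMany
        = ((oshMany A').bind fun u => (oshMany B').bind fun v =>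
            (shuffles v b₀).bind fun q => (shuffles u (q ++ [y])).bind fun t =>
              (shuffles t a₀).map (· ++ [x]))
          + ((oshMany A').bind fun u => (shuffles u a₀).bind fun p =>
            (oshMany B').bind fun v => (shuffles (p ++ [x]) v).bind fun t =>
              (shuffles t b₀).map (· ++ [y])) := by
      rw [shuffles_snoc A' B' (a₀ ++ [x]) (b₀ ++ [y]), Multiset.add_bind,
        Multiset.bind_map, Multiset.bind_map]
      congr 1
      · simp only [oshMany_concat, osh2_concat]
        rw [← Multiset.bind_assoc, ← ih1]
        simp only [Multiset.bind_assoc, oshMany_concat, osh2_concat, Multiset.bind_map]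
      · simp only [oshMany_concat, osh2_concat]
        rw [← Multiset.bind_assoc, ← ih2]
        simp only [Multiset.bind_assoc, oshMany_concat, osh2_concat, Multiset.bind_map]
    rw [L, R]
    simp only [Multiset.bind_add]
    congr 1
    · refine Multiset.bind_congr fun u _ => ?_
      rw [Multiset.bind_bind]
      refine Multiset.bind_congr fun v _ => ?_
      rw [Multiset.bind_bind]
      refine Multiset.bind_congr fun q _ => ?_
      rw [← Multiset.map_bind, ← Multiset.map_bind, shuffles_bind_comm]
    · refine Multiset.bind_congr fun u _ => Multiset.bind_congr fun p _ =>
        Multiset.bind_congr fun v _ => ?_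
      rw [← Multiset.map_bind, ← Multiset.map_bind, shuffles_assoc]

lemma key' (A B : List (List α)) (hA : ∀ w ∈ A, w ≠ []) (hB : ∀ w ∈ B, w ≠ []) :
    ((oshMany A).bind fun u => (oshMany B).bind fun v => shuffles u v)
      = (shuffles A B).bind oshMany :=
  key (A.length + B.length) A B rfl hA hB

lemma foldl_general (blocks : List (List (List α))) :
    ∀ (S : Multiset (List (List α))),
    (∀ L ∈ S, ∀ w ∈ L, w ≠ []) → (∀ b ∈ blocks, ∀ w ∈ b, w ≠ []) →
    List.foldl (fun acc mw => acc.bind fun u => mw.bind fun w => shuffles u w)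
        (S.bind oshMany) (blocks.map oshMany)
      = (List.foldl (fun acc b => acc.bind fun u => shuffles u b) S blocks).bind oshMany := by
  induction blocks with
  | nil => intro S _ _; simp
  | cons b rest ih =>
    intro S hS hb
    simp only [List.map_cons, List.foldl_cons]
    have step : ((S.bind oshMany).bind fun u => (oshMany b).bind fun w => shuffles u w)
        = (S.bind fun L => shuffles L b).bind oshMany := by
      rw [Multiset.bind_assoc, Multiset.bind_assoc]
      exact Multiset.bind_congr fun L hL =>
        key' L b (hS L hL) (hb b List.mem_cons_self)
    rw [step]
    refine ih (S.bind fun L => shuffles L b) ?_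
      (fun c hc => hb c (List.mem_cons_of_mem _ hc))
    intro L hL w hw
    rw [Multiset.mem_bind] at hL
    obtain ⟨L₀, hL₀, hLs⟩ := hL
    rcases mem_or_of_mem_shuffles hLs w hw with h | h
    · exact hS L₀ hL₀ w h
    · exact hb b List.mem_cons_self w h

end Aux

/-- Given blocks of nonempty words, first ordered-shuffling
within each block and then shuffling the resulting words yields the same
multiset as taking, for each interleaving of the blocks themselves (these
interleavings of blocks correspond exactly, with multiplicity, to the
`(n₁,…,n_m)`-shuffle permutations `π`, the reordered word list being
`(w^{π⁻¹(1)},…,w^{π⁻¹(n)})`), the ordered shuffles of the reordered full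
list of words, and forming the disjoint union. -/
theorem shuffle_of_orderedShuffles_eq_sum_over_blockShuffles {α : Type*}
    (blocks : List (List (List α)))
    (h : ∀ b ∈ blocks, ∀ w ∈ b, w ≠ []) :
    shManyM (blocks.map oshMany) = (shMany blocks).bind oshMany := by
  have := foldl_general blocks {[]} (by simp) h
  simpa [shManyM, shMany, oshMany_nil, Multiset.singleton_bind] using this
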